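/- Let n ≥ 1 and k_1, …, k_n ≥ 1 be integers, and define f(s) = n − s − Σ_{l=1}^n 1/(1 + (s−1) + … + (s−1)^{k_l}). Then f is strictly concave on (1, ∞): its second derivative satisfies f''(s) < 0 for all s > 1. -/

import Mathlib

open Finset

noncomputable def q0 (K : ℕ) (s : ℝ) : ℝ := ∑ j ∈ range (K+1), (s-1)^j
noncomputable def q1 (K : ℕ) (s : ℝ) : ℝ := ∑ j ∈ range (K+1), (j:ℝ) * (s-1)^(j-1)
noncomputable def q2 (K : ℕ) (s : ℝ) : ℝ :=
  ∑ j ∈ range (K+1), (j:ℝ) * ((↑(j-1)) * (s-1)^(j-1-1))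
noncomputable def q3 (K : ℕ) (s : ℝ) : ℝ :=
  ∑ j ∈ range (K+1), (j:ℝ) * ((↑(j-1)) * ((↑(j-1-1)) * (s-1)^(j-1-1-1)))

lemma hq0 (K : ℕ) (s : ℝ) : HasDerivAt (q0 K) (q1 K s) s := by
  apply HasDerivAt.fun_sum
  intro j _
  simpa [Function.comp_def] using (hasDerivAt_pow j (s-1)).comp s ((hasDerivAt_id s).sub_const 1)

lemma hq1 (K : ℕ) (s : ℝ) : HasDerivAt (q1 K) (q2 K s) s := by
  apply HasDerivAt.fun_sum
  intro j _
  simpa [mul_assoc] using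
    (((hasDerivAt_pow (j-1) (s-1)).comp s ((hasDerivAt_id s).sub_const 1)).const_mul (j:ℝ))

lemma hq2 (K : ℕ) (s : ℝ) : HasDerivAt (q2 K) (q3 K s) s := by
  apply HasDerivAt.fun_sum
  intro j _
  simpa [mul_assoc] using
    ((((hasDerivAt_pow (j-1-1) (s-1)).comp s
      ((hasDerivAt_id s).sub_const 1)).const_mul ((j:ℝ)*(↑(j-1)))))

lemma he1 (K : ℕ) (s : ℝ) : q0 K s * (s-2) = (s-1)^(K+1) - 1 := by
  have := geom_sum_mul (s-1) (K+1)
  unfold q0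
  linear_combination this

lemma he2 (K : ℕ) (s : ℝ) :
    q1 K s * (s-2) + q0 K s = ((K:ℝ)+1) * (s-1)^K := by
  have hL : HasDerivAt (fun s => q0 K s * (s-2)) (q1 K s * (s-2) + q0 K s * 1) s :=
    (hq0 K s).mul ((hasDerivAt_id s).sub_const 2)
  have hR : HasDerivAt (fun s : ℝ => (s-1)^(K+1) - 1) ((↑(K+1) * (s-1)^K) * 1) s := by
    simpa using
      (((hasDerivAt_pow (K+1) (s-1)).comp s ((hasDerivAt_id s).sub_const 1)).sub_const 1)
  have hfun : (fun s => q0 K s * (s-2)) = fun s : ℝ => (s-1)^(K+1) - 1 :=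
    funext fun s => he1 K s
  have := hL.unique (hfun ▸ hR)
  push_cast at this
  linarith [this]

lemma he3 (K : ℕ) (s : ℝ) :
    q2 K s * (s-2) + 2 * q1 K s = ((K:ℝ)+1) * K * (s-1)^(K-1) := by
  have hL : HasDerivAt (fun s => q1 K s * (s-2) + q0 K s)
      ((q2 K s * (s-2) + q1 K s * 1) + q1 K s) s :=
    ((hq1 K s).mul ((hasDerivAt_id s).sub_const 2)).add (hq0 K s)
  have hR : HasDerivAt (fun s : ℝ => ((K:ℝ)+1) * (s-1)^K)
      (((K:ℝ)+1) * ((↑K * (s-1)^(K-1)) * 1)) s :=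
    ((hasDerivAt_pow K (s-1)).comp s ((hasDerivAt_id s).sub_const 1)).const_mul _
  have hfun : (fun s => q1 K s * (s-2) + q0 K s) = fun s : ℝ => ((K:ℝ)+1) * (s-1)^K :=
    funext fun s => he2 K s
  have := hL.unique (hfun ▸ hR)
  linarith [this]

lemma he4 (K : ℕ) (s : ℝ) :
    q3 K s * (s-2) + 3 * q2 K s = ((K:ℝ)+1) * K * (↑(K-1) * (s-1)^(K-1-1)) := by
  have hL : HasDerivAt (fun s => q2 K s * (s-2) + 2 * q1 K s)
      ((q3 K s * (s-2) + q2 K s * 1) + 2 * q2 K s) s :=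
    ((hq2 K s).mul ((hasDerivAt_id s).sub_const 2)).add ((hq1 K s).const_mul 2)
  have hR : HasDerivAt (fun s : ℝ => ((K:ℝ)+1) * K * (s-1)^(K-1))
      (((K:ℝ)+1) * K * ((↑(K-1) * (s-1)^(K-1-1)) * 1)) s :=
    ((hasDerivAt_pow (K-1) (s-1)).comp s ((hasDerivAt_id s).sub_const 1)).const_mul _
  have hfun : (fun s => q2 K s * (s-2) + 2 * q1 K s)
      = fun s : ℝ => ((K:ℝ)+1) * K * (s-1)^(K-1) :=
    funext fun s => he3 K s
  have := hL.unique (hfun ▸ hR)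
  linarith [this]

lemma q0_pos (K : ℕ) (s : ℝ) (hs : 1 < s) : 0 < q0 K s := by
  unfold q0
  have h0 : (0:ℕ) ∈ range (K+1) := by simp
  calc (0:ℝ) < (s-1)^0 := by norm_num
    _ ≤ ∑ j ∈ range (K+1), (s-1)^j := by
        apply Finset.single_le_sum (f := fun j => (s-1)^j) _ h0
        intro i _
        have h1 : (0:ℝ) ≤ s - 1 := by linarith
        positivity

lemma S_eq (K : ℕ) (s : ℝ) :
    ∑ j ∈ range (K+1), ((2*j : ℝ) - K) * (s-1)^j
      = 2*(s-1)*q1 K s - K * q0 K s := by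
  unfold q1 q0
  rw [Finset.mul_sum, Finset.mul_sum, ← Finset.sum_sub_distrib]
  apply Finset.sum_congr rfl
  intro j _
  rcases j with _ | i
  · simp
  · push_cast
    ring_nf

lemma S_pos (K : ℕ) (hK : 1 ≤ K) (t : ℝ) (ht : 1 < t) :
    0 < ∑ j ∈ range (K+1), ((2*j : ℝ) - K) * t^j := by
  induction K with
  | zero => omega
  | succ m ih =>
    rcases Nat.eq_or_lt_of_le hK with h | h
    · -- m = 0
      have hm : m = 0 := by omega
      subst hm
      norm_num [Finset.sum_range_succ]
      linarith
    · have hm : 1 ≤ m := by omega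
      have hgeom : ∑ j ∈ range (m+1), t^j < ((m:ℝ)+1) * t^(m+1) := by
        have h1 : ∑ j ∈ range (m+1), t^j < ∑ j ∈ range (m+1), t^(m+1) := by
          apply Finset.sum_lt_sum
          · intro i hi
            apply pow_le_pow_right₀ (le_of_lt ht)
            simp at hi; omega
          · exact ⟨0, by simp, by simpa using one_lt_pow₀ ht (by omega)⟩
        simpa [mul_comm] using h1
      have key : ∑ j ∈ range (m+1+1), ((2*j : ℝ) - (m+1)) * t^j
          = (∑ j ∈ range (m+1), ((2*j : ℝ) - m) * t^j)
            + (((m:ℝ)+1) * t^(m+1) - ∑ j ∈ range (m+1), t^j) := by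
        rw [Finset.sum_range_succ]
        have hterm : ∀ j ∈ range (m+1),
            ((2*j : ℝ) - ((m:ℝ)+1)) * t^j = ((2*j:ℝ) - m)*t^j - t^j := by
          intro j _; ring
        push_cast
        rw [Finset.sum_congr rfl hterm, Finset.sum_sub_distrib]
        push_cast
        ring
      push_cast at key ⊢
      rw [key]
      linarith [ih hm, hgeom]

lemma S_neg (K : ℕ) (hK : 1 ≤ K) (t : ℝ) (ht0 : 0 < t) (ht : t < 1) :
    ∑ j ∈ range (K+1), ((2*j : ℝ) - K) * t^j < 0 := by
  have htne : t ≠ 0 := ne_of_gt ht0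
  have hrefl : ∑ j ∈ range (K+1), ((2*j : ℝ) - K) * t^j
      = -t^K * ∑ j ∈ range (K+1), ((2*j : ℝ) - K) * (1/t)^j := by
    have h := Finset.sum_range_reflect (fun j => ((2*j:ℝ) - K) * t^j) (K+1)
    rw [← h, Finset.mul_sum]
    apply Finset.sum_congr rfl
    intro j hj
    have hjK : j ≤ K := by simp at hj; omega
    have hcast : ((K - j : ℕ) : ℝ) = (K:ℝ) - j := by
      push_cast [Nat.cast_sub hjK]; ring
    have hpow : t^(K - j) = t^K / t^j := pow_sub₀ t htne hjK
    simp only [Nat.add_sub_cancel]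
    rw [hcast, hpow, one_div, inv_pow]
    field_simp
    ring
  rw [hrefl]
  have h1t : 1 < 1/t := by
    rw [lt_div_iff₀ ht0]; linarith
  have hSpos := S_pos K hK (1/t) h1t
  have hpow : 0 < t^K := pow_pos ht0 K
  nlinarith

lemma keyIneq (K : ℕ) (hK : 1 ≤ K) (s : ℝ) (hs : 1 < s) :
    q0 K s * q2 K s < 2 * (q1 K s)^2 := by
  obtain ⟨m, rfl⟩ : ∃ m, K = m + 1 := ⟨K-1, by omega⟩
  set a := q0 (m+1) s with ha
  set b := q1 (m+1) s with hb
  set c := q2 (m+1) s with hc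
  by_cases h2 : s = 2
  · subst h2
    have e2 := he2 (m+1) 2
    have e3 := he3 (m+1) 2
    have e4 := he4 (m+1) 2
    simp only [Nat.add_sub_cancel] at e3 e4
    norm_num at e2 e3 e4
    push_cast at e2 e3 e4
    rw [← ha] at e2
    rw [← hb] at e3
    rw [← hc] at e4
    have ha' : a = (m:ℝ)+2 := by linarith
    have hb' : b = ((m:ℝ)+2)*((m:ℝ)+1)/2 := by linarith
    have hc' : c = ((m:ℝ)+2)*((m:ℝ)+1)*(m:ℝ)/3 := by linarith
    rw [ha', hb', hc']
    have expand : 2*((((m:ℝ)+2)*((m:ℝ)+1)/2))^2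
        - ((m:ℝ)+2)*(((m:ℝ)+2)*((m:ℝ)+1)*(m:ℝ)/3)
        = ((m:ℝ)+2)^2*((m:ℝ)+1)*((m:ℝ)+3)/6 := by ring
    have hpos : 0 < ((m:ℝ)+2)^2*((m:ℝ)+1)*((m:ℝ)+3)/6 := by positivity
    linarith
  · have ht0 : 0 < s - 1 := by linarith
    have hS : 0 < (s-2) * (2*(s-1)*b - ((m:ℝ)+2-1)*a) := by
      have hSe := S_eq (m+1) s
      push_cast at hSe
      rcases lt_or_gt_of_ne h2 with hlt | hgt
      · have := S_neg (m+1) (by omega) (s-1) ht0 (by linarith)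
        push_cast at this
        rw [hSe] at this
        have h2n : s - 2 < 0 := by linarith
        nlinarith
      · have := S_pos (m+1) (by omega) (s-1) (by linarith)
        push_cast at this
        rw [hSe] at this
        nlinarith
    have h2e := he2 (m+1) s
    have h3e := he3 (m+1) s
    simp only [Nat.add_sub_cancel] at h3e
    push_cast at h2e h3e
    have hid : (s-2)^2 * (2*b^2 - a*c)
        = ((m:ℝ)+2) * (s-1)^m * ((s-2) * (2*(s-1)*b - ((m:ℝ)+2-1)*a)) := by
      linear_combination (2*(s-2)*b) * h2e - (a*(s-2)) * h3e
    have hpow : 0 < (s-1)^m := pow_pos ht0 m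
    have h5 : 0 < (s-2)^2 * (2*b^2 - a*c) := by
      rw [hid]
      have : 0 < ((m:ℝ)+2) * (s-1)^m := by positivity
      exact mul_pos this hS
    have hu2 : 0 < (s-2)^2 := by
      have : s - 2 ≠ 0 := fun h => h2 (by linarith)
      positivity
    nlinarith

/-- The function `f(s) = n - s - ∑_{l=1}^n 1/(1 + (s-1) + … + (s-1)^{k_l})`
attached to the star-shaped graph with `n` branches of lengths `k 1, …, k n`. -/
noncomputable def starFun (n : ℕ) (k : Fin n → ℕ) (s : ℝ) : ℝ :=
  (n : ℝ) - s - ∑ l, (∑ j ∈ Finset.range (k l + 1), (s - 1) ^ j)⁻¹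

theorem stmt_4 (n : ℕ) (hn : 1 ≤ n) (k : Fin n → ℕ) (hk : ∀ l, 1 ≤ k l) :
    ∀ s : ℝ, 1 < s → deriv (deriv (starFun n k)) s < 0 := by
  intro s hs
  set F1 : ℝ → ℝ := fun x => ((0:ℝ) - 1) - ∑ l, (-(q1 (k l) x) / (q0 (k l) x)^2) with hF1def
  have hF1 : ∀ x : ℝ, 1 < x → HasDerivAt (starFun n k) (F1 x) x := by
    intro x hx
    have hrw : starFun n k = fun x : ℝ => (n:ℝ) - x - ∑ l, (q0 (k l) x)⁻¹ := rfl
    rw [hrw]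
    exact ((hasDerivAt_const x (n:ℝ)).sub (hasDerivAt_id x)).sub
      (HasDerivAt.fun_sum fun l _ => (hq0 (k l) x).inv (ne_of_gt (q0_pos _ _ hx)))
  have heq : deriv (starFun n k) =ᶠ[nhds s] F1 := by
    filter_upwards [isOpen_Ioi.mem_nhds hs] with x hx
    exact (hF1 x hx).deriv
  rw [heq.deriv_eq]
  have hF2 : HasDerivAt F1 (0 - ∑ l,
      ((-(q2 (k l) s)) * (q0 (k l) s)^2 - (-(q1 (k l) s)) * ((2:ℕ) * (q0 (k l) s)^(2-1) * q1 (k l) s))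
        / ((q0 (k l) s)^2)^2) s := by
    apply HasDerivAt.sub (hasDerivAt_const s ((0:ℝ)-1))
    apply HasDerivAt.fun_sum
    intro l _
    exact ((hq1 (k l) s).neg).div ((hq0 (k l) s).pow 2)
      (by have := q0_pos (k l) s hs; positivity)
  rw [hF2.deriv]
  have hsum : 0 < ∑ l : Fin n,
      ((-(q2 (k l) s)) * (q0 (k l) s)^2 - (-(q1 (k l) s)) * ((2:ℕ) * (q0 (k l) s)^(2-1) * q1 (k l) s))
        / ((q0 (k l) s)^2)^2 := by
    apply Finset.sum_pos
    · intro l _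
      have ha0 := q0_pos (k l) s hs
      have hkey := keyIneq (k l) (hk l) s hs
      have hnum : (0:ℝ) < (-(q2 (k l) s)) * (q0 (k l) s)^2
          - (-(q1 (k l) s)) * ((2:ℕ) * (q0 (k l) s)^(2-1) * q1 (k l) s) := by
        have hrw : (-(q2 (k l) s)) * (q0 (k l) s)^2
            - (-(q1 (k l) s)) * ((2:ℕ) * (q0 (k l) s)^(2-1) * q1 (k l) s)
            = q0 (k l) s * (2 * (q1 (k l) s)^2 - q0 (k l) s * q2 (k l) s) := by
          push_cast
          ring
        rw [hrw]
        exact mul_pos ha0 (by linarith)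
      have hden : (0:ℝ) < ((q0 (k l) s)^2)^2 := by positivity
      positivity
    · exact ⟨⟨0, by omega⟩, Finset.mem_univ _⟩
  linarith
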